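/- Ville's theorem, easy direction: if d : List Bool → ℝ≥0 is a martingale (d(σ ++ [false]) + d(σ ++ [true]) = 2·d(σ) for all σ) with d([]) > 0, then the set of infinite binary sequences x on which d succeeds, i.e. limsup_N d(x|_N) = ∞, has fair-coin product measure zero. -/

import Mathlib

open MeasureTheory Filter

/-- The fair-coin product measure `μ^∞` on infinite binary sequences (pushforward of
Lebesgue measure on `[0,1)` under binary digit extraction). -/
noncomputable def muInf : Measure (ℕ → Bool) :=
  Measure.map (fun (t : ℝ) (n : ℕ) => decide (⌊t * 2 ^ (n + 1)⌋ % 2 = 1))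
    (volume.restrict (Set.Ico (0 : ℝ) 1))

/-- The initial segment `x|_N` (first `N` bits) of an infinite binary sequence. -/
def initSeg (x : ℕ → Bool) (N : ℕ) : List Bool := (List.range N).map x

namespace Ville
open Classical

/-- The digit-extraction map. -/
noncomputable def F : ℝ → ℕ → Bool := fun t n => decide (⌊t * 2 ^ (n + 1)⌋ % 2 = 1)

/-- The stopping condition: some prefix of `σ` has `d`-value at least `lam`. -/
def hit (d : List Bool → NNReal) (lam : NNReal) (σ : List Bool) : Prop :=
  ∃ n, lam ≤ d (σ.take n)

/-- Stopped martingale, on reversed lists. -/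
noncomputable def E (d : List Bool → NNReal) (lam : NNReal) : List Bool → NNReal
  | [] => d []
  | b :: τ => if hit d lam τ.reverse then E d lam τ else d (τ.reverse ++ [b])

/-- The stopped martingale. -/
noncomputable def e (d : List Bool → NNReal) (lam : NNReal) (σ : List Bool) : NNReal :=
  E d lam σ.reverse

variable {d : List Bool → NNReal} {lam : NNReal}

lemma e_nil : e d lam [] = d [] := rfl

lemma e_append (σ : List Bool) (b : Bool) :
    e d lam (σ ++ [b]) = if hit d lam σ then e d lam σ else d (σ ++ [b]) := by
  simp only [e, List.reverse_append, List.reverse_cons, List.reverse_nil, List.nil_append,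
    List.singleton_append, E, List.reverse_reverse]

lemma hit_mono (h : hit d lam σ) (b : Bool) : hit d lam (σ ++ [b]) := by
  obtain ⟨n, hn⟩ := h
  refine ⟨min n σ.length, ?_⟩
  have h1 : (σ ++ [b]).take (min n σ.length) = σ.take (min n σ.length) :=
    List.take_append_of_le_length (min_le_right _ _)
  rw [h1]
  rcases le_or_gt n σ.length with h2 | h2
  · rwa [min_eq_left h2]
  · rw [min_eq_right h2.le, List.take_length]
    rwa [List.take_of_length_le h2.le] at hn

lemma e_eq_of_not_hit (h : ¬ hit d lam σ) : e d lam σ = d σ := by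
  induction σ using List.reverseRecOn with
  | nil => rfl
  | append_singleton τ b _ =>
    rw [e_append, if_neg]
    intro hτ; exact h (hit_mono hτ b)

lemma hit_of_le_d (h : lam ≤ d σ) : hit d lam σ := ⟨σ.length, by rwa [List.take_length]⟩

lemma le_e_of_hit (h : hit d lam σ) : lam ≤ e d lam σ := by
  induction σ using List.reverseRecOn with
  | nil => obtain ⟨n, hn⟩ := h; simpa [e_nil] using hn
  | append_singleton τ b ih =>
    by_cases hτ : hit d lam τ
    · rw [e_append, if_pos hτ]; exact ih hτ
    · rw [e_append, if_neg hτ]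
      obtain ⟨n, hn⟩ := h
      rcases le_or_gt n τ.length with h2 | h2
      · exact absurd ⟨n, by rwa [List.take_append_of_le_length h2] at hn⟩ hτ
      · rwa [List.take_of_length_le (by simpa using h2)] at hn

lemma hit_of_le_e (h : lam ≤ e d lam σ) : hit d lam σ := by
  by_cases hσ : hit d lam σ
  · exact hσ
  · rw [e_eq_of_not_hit hσ] at h; exact hit_of_le_d h

lemma e_mart (hmart : ∀ σ : List Bool, d (σ ++ [false]) + d (σ ++ [true]) = 2 * d σ)
    (σ : List Bool) :
    e d lam (σ ++ [false]) + e d lam (σ ++ [true]) = 2 * e d lam σ := by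
  by_cases hσ : hit d lam σ
  · rw [e_append, e_append, if_pos hσ, if_pos hσ, two_mul]
  · rw [e_append, e_append, if_neg hσ, if_neg hσ, e_eq_of_not_hit hσ, hmart]

lemma ofFn_snoc {M : ℕ} (v : Fin M → Bool) (b : Bool) :
    List.ofFn (Fin.snoc v b : Fin (M+1) → Bool) = List.ofFn v ++ [b] := by
  rw [List.ofFn_succ']
  simp [Fin.snoc_castSucc, List.concat_eq_append]

lemma sum_e (hmart : ∀ σ : List Bool, d (σ ++ [false]) + d (σ ++ [true]) = 2 * d σ)
    (lam : NNReal) (M : ℕ) :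
    ∑ v : Fin M → Bool, e d lam (List.ofFn v) = 2 ^ M * d [] := by
  induction M with
  | zero => simp [e_nil]
  | succ M ih =>
    rw [← Fintype.sum_equiv (Fin.snocEquiv (fun _ => Bool))
      (fun p => e d lam (List.ofFn (Fin.snocEquiv (fun _ => Bool) p)))
      (fun v => e d lam (List.ofFn v)) (fun p => rfl)]
    rw [Fintype.sum_prod_type_right]
    have : ∀ v : Fin M → Bool,
        ∑ b : Bool, e d lam (List.ofFn (Fin.snocEquiv (fun _ => Bool) (b, v)))
          = 2 * e d lam (List.ofFn v) := by
      intro v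
      rw [Fintype.sum_bool]
      show e d lam (List.ofFn (Fin.snoc v true)) + e d lam (List.ofFn (Fin.snoc v false)) = _
      rw [ofFn_snoc, ofFn_snoc, add_comm, e_mart hmart]
    rw [Finset.sum_congr rfl (fun v _ => this v), ← Finset.mul_sum, ih]
    ring

/-- Floor-halving. -/
lemma floor_half (u : ℝ) : ⌊u⌋ = ⌊2 * u⌋ / 2 := by
  set a := ⌊2 * u⌋ with ha
  have h1 : (a : ℝ) ≤ 2 * u := Int.floor_le _
  have h2 : 2 * u < (a : ℝ) + 1 := Int.lt_floor_add_one _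
  have h3 : a % 2 = 0 ∨ a % 2 = 1 := by omega
  have h4 : a = 2 * (a / 2) + a % 2 := by omega
  have hc : (a : ℝ) = 2 * ((a / 2 : ℤ) : ℝ) + ((a % 2 : ℤ) : ℝ) := by exact_mod_cast h4
  rcases h3 with h | h <;> rw [h] at hc <;>
    refine Int.floor_eq_iff.2 ⟨?_, ?_⟩ <;> push_cast at hc ⊢ <;> linarith

/-- Floors at level `M` agree when the first `M` digits agree. -/
lemma floor_agree : ∀ (M : ℕ) (t t' : ℝ), t ∈ Set.Ico (0:ℝ) 1 → t' ∈ Set.Ico (0:ℝ) 1 →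
    (∀ i < M, F t i = F t' i) → ⌊t * 2 ^ M⌋ = ⌊t' * 2 ^ M⌋ := by
  intro M
  induction M with
  | zero =>
    intro t t' ht ht' _
    simp only [pow_zero, mul_one]
    rw [Int.floor_eq_zero_iff.2 ht, Int.floor_eq_zero_iff.2 ht']
  | succ M ih =>
    intro t t' ht ht' hdig
    have hM : ⌊t * 2 ^ M⌋ = ⌊t' * 2 ^ M⌋ := ih t t' ht ht' (fun i hi => hdig i (hi.trans (Nat.lt_succ_self M)))
    have e1 : ⌊t * 2 ^ M⌋ = ⌊t * 2 ^ (M+1)⌋ / 2 := by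
      have : t * 2 ^ (M+1) = 2 * (t * 2 ^ M) := by ring
      rw [this, ← floor_half]
    have e2 : ⌊t' * 2 ^ M⌋ = ⌊t' * 2 ^ (M+1)⌋ / 2 := by
      have : t' * 2 ^ (M+1) = 2 * (t' * 2 ^ M) := by ring
      rw [this, ← floor_half]
    have hm : (⌊t * 2 ^ (M+1)⌋ % 2 = 1) ↔ (⌊t' * 2 ^ (M+1)⌋ % 2 = 1) := by
      have := hdig M (Nat.lt_succ_self M)
      simpa [F] using this
    rw [e1, e2] at hM
    omega

/-- Cylinder set determined by the first `M` coordinates. -/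
def Cyl {M : ℕ} (v : Fin M → Bool) : Set (ℕ → Bool) := {x | ∀ i : Fin M, x i = v i}

lemma measurable_Cyl {M : ℕ} (v : Fin M → Bool) : MeasurableSet (Cyl v) := by
  have : Cyl v = ⋂ i : Fin M, (fun x : ℕ → Bool => x i) ⁻¹' {v i} := by
    ext x; simp [Cyl]
  rw [this]
  exact MeasurableSet.iInter fun i => (measurable_pi_apply (i : ℕ)) (measurableSet_singleton _)

lemma muInf_eq : muInf = Measure.map F (volume.restrict (Set.Ico (0 : ℝ) 1)) := rfl

lemma measurable_F : Measurable F := by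
  refine measurable_pi_lambda _ fun n => ?_
  exact (measurable_of_countable (fun z : ℤ => decide (z % 2 = 1))).comp
    (Int.measurable_floor.comp (measurable_id.mul_const ((2:ℝ) ^ (n + 1))))

/-- The preimage of a cylinder in `[0,1)` has volume at most `2⁻ᴹ`. -/
lemma volume_preimage_Cyl {M : ℕ} (v : Fin M → Bool) :
    volume (F ⁻¹' Cyl v ∩ Set.Ico (0:ℝ) 1) ≤ ((2 : ENNReal) ^ M)⁻¹ := by
  set T := F ⁻¹' Cyl v ∩ Set.Ico (0:ℝ) 1 with hT
  rcases Set.eq_empty_or_nonempty T with h | ⟨t₀, ht₀⟩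
  · simp [h]
  have key : ∀ t ∈ T, ⌊t * 2 ^ M⌋ = ⌊t₀ * 2 ^ M⌋ := by
    intro t ht
    refine floor_agree M t t₀ ht.2 ht₀.2 fun i hi => ?_
    have h1 : F t i = v ⟨i, hi⟩ := ht.1 ⟨i, hi⟩
    have h2 : F t₀ i = v ⟨i, hi⟩ := ht₀.1 ⟨i, hi⟩
    rw [h1, h2]
  set K : ℤ := ⌊t₀ * 2 ^ M⌋
  have hsub : T ⊆ Set.Ico ((K : ℝ) / 2 ^ M) ((K + 1 : ℝ) / 2 ^ M) := by
    intro t ht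
    have hf := key t ht
    have hpow : (0:ℝ) < 2 ^ M := by positivity
    constructor
    · rw [div_le_iff₀ hpow]
      calc (K : ℝ) = (⌊t * 2 ^ M⌋ : ℤ) := by rw [hf]
        _ ≤ t * 2 ^ M := Int.floor_le _
    · rw [lt_div_iff₀ hpow]
      calc t * 2 ^ M < (⌊t * 2 ^ M⌋ : ℤ) + 1 := Int.lt_floor_add_one _
        _ = (K : ℝ) + 1 := by rw [hf]
  calc volume T ≤ volume (Set.Ico ((K : ℝ) / 2 ^ M) ((K + 1 : ℝ) / 2 ^ M)) :=
        measure_mono hsub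
    _ = ENNReal.ofReal ((K + 1 : ℝ) / 2 ^ M - (K : ℝ) / 2 ^ M) := Real.volume_Ico
    _ = ((2 : ENNReal) ^ M)⁻¹ := by
        have : (K + 1 : ℝ) / 2 ^ M - (K : ℝ) / 2 ^ M = (2 ^ M)⁻¹ := by
          field_simp
          ring
        rw [this, ENNReal.ofReal_inv_of_pos (by positivity),
          ENNReal.ofReal_pow (by norm_num : (0:ℝ) ≤ 2)]
        norm_num

end Ville

open Ville in
/-- Ville's theorem, easy direction: if `d : List Bool → ℝ≥0` is a
martingale (`d(σ0) + d(σ1) = 2·d(σ)`) with `d([]) > 0`, then the set of sequences on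
which `d` succeeds, i.e. `limsup_N d(x|_N) = ∞`, has `μ^∞`-measure zero. -/
theorem martingale_success_measure_zero (d : List Bool → NNReal)
    (hmart : ∀ σ : List Bool, d (σ ++ [false]) + d (σ ++ [true]) = 2 * d σ)
    (hpos : 0 < d []) :
    muInf {x : ℕ → Bool |
      limsup (fun N : ℕ => (d (initSeg x N) : ENNReal)) atTop = ⊤} = 0 := by
  set S := {x : ℕ → Bool |
      limsup (fun N : ℕ => (d (initSeg x N) : ENNReal)) atTop = ⊤} with hS
  -- initSeg as ofFn
  have initSeg_ofFn : ∀ (x : ℕ → Bool) (M : ℕ),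
      initSeg x M = List.ofFn (fun i : Fin M => x i) := by
    intro x M
    apply List.ext_getElem
    · simp [initSeg]
    · intro n h1 h2
      simp [initSeg]
  -- main bound for a fixed positive lam
  have main : ∀ lam : NNReal, 0 < lam → muInf S ≤ (d [] : ENNReal) / lam := by
    intro lam hlam
    -- the hitting sets
    set B : ℕ → Set (ℕ → Bool) := fun M => {x | hit d lam (initSeg x M)} with hB
    -- S ⊆ ⋃ M, B M
    have hSsub : S ⊆ ⋃ M, B M := by
      intro x hx
      by_contra hnot
      have hall : ∀ N, (d (initSeg x N) : ENNReal) ≤ (lam : ENNReal) := by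
        intro N
        by_contra hle
        push_neg at hle
        exact hnot (Set.mem_iUnion.2 ⟨N, hit_of_le_d (ENNReal.coe_le_coe.1 hle.le)⟩)
      have : limsup (fun N : ℕ => (d (initSeg x N) : ENNReal)) atTop ≤ (lam : ENNReal) :=
        limsup_le_of_le (by isBoundedDefault) (Eventually.of_forall hall)
      rw [hx] at this
      exact absurd (this.trans_lt ENNReal.coe_lt_top) (lt_irrefl ⊤)
    -- B as union of cylinders
    have hBcyl : ∀ M, B M = ⋃ v ∈ Finset.univ.filter
        (fun v : Fin M → Bool => lam ≤ e d lam (List.ofFn v)), Cyl v := by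
      intro M
      ext x
      simp only [Set.mem_iUnion, Finset.mem_filter, Finset.mem_univ, true_and]
      constructor
      · intro hx
        refine ⟨fun i => x i, ?_, fun i => rfl⟩
        rw [← initSeg_ofFn]
        exact le_e_of_hit hx
      · rintro ⟨v, hv, hxv⟩
        have : initSeg x M = List.ofFn v := by
          rw [initSeg_ofFn]; exact congrArg List.ofFn (funext hxv)
        show hit d lam (initSeg x M)
        rw [this]
        exact hit_of_le_e hv
    have hBmeas : ∀ M, MeasurableSet (B M) := by
      intro M
      rw [hBcyl M]
      exact (Finset.univ.filter _).measurableSet_biUnion fun v _ => measurable_Cyl v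
    -- monotonicity of B
    have hBmono : Monotone B := by
      apply monotone_nat_of_le_succ
      intro M x hx
      show hit d lam (initSeg x (M+1))
      have : initSeg x (M+1) = initSeg x M ++ [x M] := by
        simp [initSeg, List.range_succ]
      rw [this]
      exact hit_mono hx (x M)
    -- per-M measure bound
    have hBbound : ∀ M, muInf (B M) ≤ (d [] : ENNReal) / lam := by
      intro M
      set Sfin := Finset.univ.filter (fun v : Fin M → Bool => lam ≤ e d lam (List.ofFn v))
        with hSfin
      -- counting bound
      have hcard : (Sfin.card : NNReal) * lam ≤ 2 ^ M * d [] := by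
        have h1 : Sfin.card • lam ≤ ∑ v ∈ Sfin, e d lam (List.ofFn v) :=
          Finset.card_nsmul_le_sum Sfin _ lam (fun v hv => (Finset.mem_filter.1 hv).2)
        have h2 : ∑ v ∈ Sfin, e d lam (List.ofFn v) ≤ ∑ v : Fin M → Bool, e d lam (List.ofFn v) :=
          Finset.sum_le_sum_of_subset (Finset.filter_subset _ _)
        rw [sum_e hmart lam M] at h2
        calc (Sfin.card : NNReal) * lam = Sfin.card • lam := (nsmul_eq_mul _ _).symm
          _ ≤ _ := h1.trans h2
      -- measure computation
      have hmap : muInf (B M) = volume (F ⁻¹' (B M) ∩ Set.Ico (0:ℝ) 1) := by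
        rw [muInf_eq]
        rw [Measure.map_apply measurable_F (hBmeas M)]
        rw [Measure.restrict_apply (measurable_F (hBmeas M))]
      rw [hmap]
      have hsub2 : F ⁻¹' (B M) ∩ Set.Ico (0:ℝ) 1 ⊆
          ⋃ v ∈ Sfin, (F ⁻¹' Cyl v ∩ Set.Ico (0:ℝ) 1) := by
        rw [hBcyl M]
        intro t ht
        obtain ⟨ht1, ht2⟩ := ht
        simp only [Set.mem_iUnion, Set.mem_preimage] at ht1 ⊢
        obtain ⟨v, hv, hvc⟩ := ht1
        exact ⟨v, hv, hvc, ht2⟩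
      calc volume (F ⁻¹' (B M) ∩ Set.Ico (0:ℝ) 1)
          ≤ ∑ v ∈ Sfin, volume (F ⁻¹' Cyl v ∩ Set.Ico (0:ℝ) 1) :=
            (measure_mono hsub2).trans (measure_biUnion_finset_le _ _)
        _ ≤ ∑ _v ∈ Sfin, ((2 : ENNReal) ^ M)⁻¹ :=
            Finset.sum_le_sum fun v _ => volume_preimage_Cyl v
        _ = (Sfin.card : ENNReal) * ((2 : ENNReal) ^ M)⁻¹ := by
            rw [Finset.sum_const, nsmul_eq_mul]
        _ ≤ (d [] : ENNReal) / lam := by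
            have hc : (Sfin.card : ENNReal) * (lam : ENNReal) ≤ 2 ^ M * (d [] : ENNReal) := by
              have := ENNReal.coe_le_coe.2 hcard
              push_cast at this
              convert this using 2 <;> norm_cast
            have hlam' : (lam : ENNReal) ≠ 0 := by exact_mod_cast hlam.ne'
            have h2M : ((2 : ENNReal) ^ M) ≠ 0 := by positivity
            have h2M' : ((2 : ENNReal) ^ M) ≠ ⊤ := by
              exact (ENNReal.pow_lt_top (by norm_num : (2:ENNReal) < ⊤)).ne
            rw [ENNReal.le_div_iff_mul_le (Or.inl hlam') (Or.inl ENNReal.coe_ne_top)]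
            calc (Sfin.card : ENNReal) * ((2:ENNReal) ^ M)⁻¹ * lam
                  = (Sfin.card : ENNReal) * lam * ((2:ENNReal) ^ M)⁻¹ := by ring
                _ ≤ 2 ^ M * (d [] : ENNReal) * ((2:ENNReal) ^ M)⁻¹ := by
                    exact mul_le_mul_left hc _
                _ = (d [] : ENNReal) * (2 ^ M * ((2:ENNReal) ^ M)⁻¹) := by ring
                _ = (d [] : ENNReal) := by
                    rw [ENNReal.mul_inv_cancel h2M h2M', mul_one]
    -- put together
    calc muInf S ≤ muInf (⋃ M, B M) := measure_mono hSsub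
      _ = ⨆ M, muInf (B M) := (hBmono.directed_le).measure_iUnion
      _ ≤ (d [] : ENNReal) / lam := iSup_le hBbound
  -- conclude
  by_contra hne
  obtain ⟨n, hn⟩ := ENNReal.exists_inv_nat_lt hne
  have hlam : (0 : NNReal) < (n + 1 : ℕ) * d [] := by positivity
  have h1 := main ((n + 1 : ℕ) * d []) hlam
  have hd0 : (d [] : ENNReal) ≠ 0 := by exact_mod_cast hpos.ne'
  have hdt : (d [] : ENNReal) ≠ ⊤ := ENNReal.coe_ne_top
  have h2 : (d [] : ENNReal) / (((n + 1 : ℕ) * d [] : NNReal) : ENNReal)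
      ≤ ((n : ENNReal))⁻¹ := by
    rw [ENNReal.coe_mul]
    have key : (d [] : ENNReal) / (((n + 1 : ℕ) : NNReal) * (d [] : ENNReal))
        = 1 / ((n + 1 : ℕ) : ENNReal) := by
      have := ENNReal.mul_div_mul_left 1 ((n + 1 : ℕ) : ENNReal) hd0 hdt
      calc (d [] : ENNReal) / (((n + 1 : ℕ) : NNReal) * (d [] : ENNReal))
          = (d [] : ENNReal) * 1 / ((d [] : ENNReal) * ((n + 1 : ℕ) : ENNReal)) := by
            rw [mul_one, mul_comm]
            norm_cast
        _ = 1 / ((n + 1 : ℕ) : ENNReal) := this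
    rw [key, one_div]
    exact ENNReal.inv_le_inv' (by exact_mod_cast Nat.le_succ n)
  have : muInf S ≤ ((n : ENNReal))⁻¹ := h1.trans h2
  exact absurd (hn.trans_le this) (lt_irrefl _)
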